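/- Fix r, T > 0 with 2rT < z̃², where z̃ is the unique positive solution of z sinh z = cosh z. Set γ = √(2(r + 1/T)) and define ℓ : [√T, ∞) → ℝ by ℓ(b) = γ sinh(γ(b−√T)) · [ b cosh(√(2rT)) − (1/√(2r)) sinh(√(2rT)) − (b−√T)/(rT+1) − e^{−γ(b−√T)}/(γ(rT+1)) ] + cosh(γ(b−√T)) · [ √(2r) · b · sinh(√(2rT)) − cosh(√(2rT)) + (1 − e^{−γ(b−√T)})/(rT+1) ]. Then ℓ is strictly increasing on [√T, ∞) and ℓ(b) → ∞ as b → ∞. -/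

import Mathlib

open Real Filter

lemma aux_sinh_lt {x : ℝ} (hx : 0 < x) : Real.sinh x < x * Real.cosh x := by
  have hmono : StrictMonoOn (fun y : ℝ => y * Real.cosh y - Real.sinh y) (Set.Ici 0) := by
    apply strictMonoOn_of_deriv_pos (convex_Ici 0)
    · exact (by fun_prop : Continuous fun y : ℝ => y * Real.cosh y - Real.sinh y).continuousOn
    · intro y hy
      rw [interior_Ici] at hy
      have hd : HasDerivAt (fun y : ℝ => y * Real.cosh y - Real.sinh y) (y * Real.sinh y) y := by
        have := ((hasDerivAt_id y).mul (Real.hasDerivAt_cosh y)).sub (Real.hasDerivAt_sinh y)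
        exact this.congr_deriv (by simp only [id_eq]; ring)
      rw [hd.deriv]
      exact mul_pos hy (Real.sinh_pos_iff.2 hy)
  have := hmono (Set.self_mem_Ici) (Set.mem_Ici.2 hx.le) hx
  simp only [Real.sinh_zero, Real.cosh_zero, mul_one, zero_mul, sub_zero, zero_sub] at this
  linarith

/-- Fix r, T > 0 with 2rT < z̃², where z̃ is the unique positive
solution of z sinh z = cosh z. With γ = √(2(r + 1/T)), the smooth-fit function
ℓ : [√T, ∞) → ℝ from Example 5.3 is strictly increasing on [√T, ∞) and
ℓ(b) → ∞ as b → ∞. -/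
theorem smooth_fit_function_strictMono_and_tendsto_atTop
    (r T : ℝ) (hr : 0 < r) (hT : 0 < T)
    (z : ℝ) (hz_pos : 0 < z) (hz_root : z * Real.sinh z = Real.cosh z)
    (hrT : 2 * r * T < z ^ 2)
    (γ : ℝ) (hγ : γ = Real.sqrt (2 * (r + 1 / T)))
    (ℓ : ℝ → ℝ)
    (hℓ : ∀ b : ℝ, ℓ b =
      γ * Real.sinh (γ * (b - Real.sqrt T)) *
        (b * Real.cosh (Real.sqrt (2 * r * T))
          - (1 / Real.sqrt (2 * r)) * Real.sinh (Real.sqrt (2 * r * T))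
          - (b - Real.sqrt T) / (r * T + 1)
          - Real.exp (-(γ * (b - Real.sqrt T))) / (γ * (r * T + 1)))
      + Real.cosh (γ * (b - Real.sqrt T)) *
        (Real.sqrt (2 * r) * b * Real.sinh (Real.sqrt (2 * r * T))
          - Real.cosh (Real.sqrt (2 * r * T))
          + (1 - Real.exp (-(γ * (b - Real.sqrt T)))) / (r * T + 1))) :
    StrictMonoOn ℓ (Set.Ici (Real.sqrt T)) ∧
      Tendsto ℓ atTop atTop := by
  have hγ0 : 0 < γ := by rw [hγ]; positivity
  set s : ℝ := Real.sqrt T with hs_def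
  set q : ℝ := Real.sqrt (2 * r) with hq_def
  set x : ℝ := Real.sqrt (2 * r * T) with hx_def
  set c₁ : ℝ := Real.cosh x with hc1_def
  set s₁ : ℝ := Real.sinh x with hs1_def
  have hs : 0 < s := Real.sqrt_pos.2 hT
  have hq : 0 < q := Real.sqrt_pos.2 (by linarith)
  have hx : 0 < x := Real.sqrt_pos.2 (by positivity)
  have hqs : q * s = x := by rw [hq_def, hs_def, hx_def, ← Real.sqrt_mul (by linarith) T]
  have hR : (0:ℝ) < r * T + 1 := by positivity
  have hR1 : (1:ℝ) < r * T + 1 := by nlinarith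
  have hc1 : 1 ≤ c₁ := Real.one_le_cosh x
  have hs1 : 0 < s₁ := Real.sinh_pos_iff.2 hx
  have hxc : s₁ < x * c₁ := aux_sinh_lt hx
  have h1R : 1 / (r * T + 1) < 1 := by rw [div_lt_one hR]; linarith
  have hsc : 1 / q * s₁ < s * c₁ := by
    rw [div_mul_eq_mul_div, div_lt_iff₀ hq, one_mul]
    calc s₁ < x * c₁ := hxc
      _ = s * c₁ * q := by rw [← hqs]; ring
  -- Simplified form of ℓ
  have hfun : ℓ = fun b => γ * Real.sinh (γ * (b - s)) *
        (b * c₁ - 1 / q * s₁ - (b - s) / (r * T + 1))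
      + Real.cosh (γ * (b - s)) * (q * b * s₁ - c₁)
      + (Real.cosh (γ * (b - s)) - 1) / (r * T + 1) := by
    funext b
    rw [hℓ b, ← Real.cosh_sub_sinh, div_mul_eq_div_div]
    have hid := Real.cosh_sq_sub_sinh_sq (γ * (b - s))
    have hinv : γ * γ⁻¹ = 1 := mul_inv_cancel₀ hγ0.ne'
    linear_combination (-(Real.sinh (γ * (b - s)) * (Real.cosh (γ * (b - s)) -
      Real.sinh (γ * (b - s)))) / (r * T + 1)) * hinv + (-(1 / (r * T + 1))) * hid
  subst hfun
  have hder : ∀ b : ℝ, HasDerivAt (fun y : ℝ => γ * Real.sinh (γ * (y - s)) *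
        (y * c₁ - 1 / q * s₁ - (y - s) / (r * T + 1))
      + Real.cosh (γ * (y - s)) * (q * y * s₁ - c₁)
      + (Real.cosh (γ * (y - s)) - 1) / (r * T + 1))
      (Real.cosh (γ * (b - s)) * (γ ^ 2 * (b * c₁ - 1 / q * s₁ - (b - s) / (r * T + 1)) + q * s₁)
        + Real.sinh (γ * (b - s)) * (γ * (q * b * s₁))) b := by
    intro b
    have hu : HasDerivAt (fun y : ℝ => γ * (y - s)) γ b := by
      simpa using ((hasDerivAt_id b).sub_const s).const_mul γ
    have hsh : HasDerivAt (fun y : ℝ => Real.sinh (γ * (y - s)))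
        (Real.cosh (γ * (b - s)) * γ) b := (Real.hasDerivAt_sinh _).comp b hu
    have hch : HasDerivAt (fun y : ℝ => Real.cosh (γ * (y - s)))
        (Real.sinh (γ * (b - s)) * γ) b := (Real.hasDerivAt_cosh _).comp b hu
    have hA : HasDerivAt (fun y : ℝ => y * c₁ - 1 / q * s₁ - (y - s) / (r * T + 1))
        (c₁ - 1 / (r * T + 1)) b := by
      have := (((hasDerivAt_id b).mul_const c₁).sub_const (1 / q * s₁)).sub
        (((hasDerivAt_id b).sub_const s).div_const (r * T + 1))
      exact this.congr_deriv (by ring)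
    have hB : HasDerivAt (fun y : ℝ => q * y * s₁ - c₁) (q * s₁) b := by
      have := (((hasDerivAt_id b).const_mul q).mul_const s₁).sub_const c₁
      exact this.congr_deriv (by ring)
    have H := (((hsh.const_mul γ).mul hA).add (hch.mul hB)).add
      ((hch.sub_const 1).div_const (r * T + 1))
    exact H.congr_deriv (by ring)
  have hpos : ∀ b : ℝ, s ≤ b →
      0 < Real.cosh (γ * (b - s)) * (γ ^ 2 * (b * c₁ - 1 / q * s₁ - (b - s) / (r * T + 1)) + q * s₁)
        + Real.sinh (γ * (b - s)) * (γ * (q * b * s₁)) := by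
    intro b hb
    have hb0 : 0 < b := lt_of_lt_of_le hs hb
    have hu0 : 0 ≤ γ * (b - s) := mul_nonneg hγ0.le (by linarith)
    have hshn : 0 ≤ Real.sinh (γ * (b - s)) := Real.sinh_nonneg_iff.2 hu0
    have hchp : 0 < Real.cosh (γ * (b - s)) := Real.cosh_pos _
    have hkey : 0 < γ ^ 2 * (b * c₁ - 1 / q * s₁ - (b - s) / (r * T + 1)) + q * s₁ := by
      have e : γ ^ 2 * (b * c₁ - 1 / q * s₁ - (b - s) / (r * T + 1)) + q * s₁
          = γ ^ 2 * ((c₁ - 1 / (r * T + 1)) * (b - s) + (s * c₁ - 1 / q * s₁)) + q * s₁ := by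
        ring
      rw [e]
      have h2 : 0 ≤ (c₁ - 1 / (r * T + 1)) * (b - s) := mul_nonneg (by linarith) (by linarith)
      have h4 := mul_pos (pow_pos hγ0 2)
        (show 0 < (c₁ - 1 / (r * T + 1)) * (b - s) + (s * c₁ - 1 / q * s₁) by linarith)
      have h5 := mul_pos hq hs1
      linarith
    exact add_pos_of_pos_of_nonneg (mul_pos hchp hkey)
      (mul_nonneg hshn (by positivity))
  constructor
  · apply strictMonoOn_of_deriv_pos (convex_Ici s)
    · exact Continuous.continuousOn (by fun_prop)
    · intro b hb
      rw [interior_Ici] at hb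
      rw [(hder b).deriv]
      exact hpos b (le_of_lt hb)
  · apply tendsto_atTop_mono' atTop _
      (tendsto_atTop_add_const_right _ (-c₁) (tendsto_id.const_mul_atTop (mul_pos hq hs1)))
    filter_upwards [eventually_ge_atTop (max s (c₁ / (q * s₁)))] with b hb
    have hbs : s ≤ b := le_trans (le_max_left _ _) hb
    have hb0 : 0 < b := lt_of_lt_of_le hs hbs
    have hBpos : 0 ≤ q * b * s₁ - c₁ := by
      have h6 : c₁ / (q * s₁) ≤ b := le_trans (le_max_right _ _) hb
      rw [div_le_iff₀ (mul_pos hq hs1)] at h6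
      nlinarith
    have hu0 : 0 ≤ γ * (b - s) := mul_nonneg hγ0.le (by linarith)
    have hshn : 0 ≤ Real.sinh (γ * (b - s)) := Real.sinh_nonneg_iff.2 hu0
    have hch1 : 1 ≤ Real.cosh (γ * (b - s)) := Real.one_le_cosh _
    have hA0 : 0 ≤ b * c₁ - 1 / q * s₁ - (b - s) / (r * T + 1) := by
      have e : b * c₁ - 1 / q * s₁ - (b - s) / (r * T + 1)
          = (c₁ - 1 / (r * T + 1)) * (b - s) + (s * c₁ - 1 / q * s₁) := by ring
      rw [e]
      have h2 : 0 ≤ (c₁ - 1 / (r * T + 1)) * (b - s) := mul_nonneg (by linarith) (by linarith)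
      linarith
    simp only [id_eq]
    have h7 : 0 ≤ γ * Real.sinh (γ * (b - s)) *
        (b * c₁ - 1 / q * s₁ - (b - s) / (r * T + 1)) :=
      mul_nonneg (mul_nonneg hγ0.le hshn) hA0
    have h8 : 0 ≤ (Real.cosh (γ * (b - s)) - 1) * (q * b * s₁ - c₁) :=
      mul_nonneg (by linarith) hBpos
    have h9 : 0 ≤ (Real.cosh (γ * (b - s)) - 1) / (r * T + 1) :=
      div_nonneg (by linarith) hR.le
    nlinarith [h7, h8, h9]
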